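/- Let n ≥ 3 be an integer, 0 ≤ k ≤ n−2, and let z, y be (n−1)-tuples of positive reals. Define y′ and z′ by the formulas y′_j = y_j·(z_{k+2−j}+y_{j−1})/(z_{k+1−j}+y_j) and z′_j = z_j·(z_{j+1}+y_{k−j})/(z_j+y_{k+1−j}) for j = 1,…,n−1 (subscripts modulo n in {1,…,n}, with y_n = z_n = 0). Define n-tuples p = (z_{k+1}, z_{k+2}, …, z_{n−1}, 0, z_1, z_2, …, z_k) and q = (0, y_{n−1}, y_{n−2}, …, y_1) of nonnegative reals, and define p′_i = p_i·(p_{i+1}+q_{i+1})/(p_i+q_i), q′_i = q_i·(p_{i+1}+q_{i+1})/(p_i+q_i) for i = 1,…,n (indices modulo n). Then p′ = (z′_{k+1}, z′_{k+2}, …, z′_{n−1}, 0, z′_1, …, z′_k) and q′ = (0, y′_{n−1}, y′_{n−2}, …, y′_1). In other words, the transformation (z,y) ↦ (y′,z′) defining φ(n,k) is described by the geometric R-matrix map R̄ : (p,q) ↦ (q′,p′). -/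
import Mathlib


/-- The transformation `(z,y) ↦ (y′,z′)` defining `φ(n,k)` is described by the geometric
R-matrix `R̄ : (p,q) ↦ (q′,p′)`.  Tuples of length `n-1` are modelled as functions on
`ZMod n`, whose value at the class `0` (corresponding to the subscript `n`) is `0`
(the convention `y_n = z_n = 0`); the `n`-tuples `p`, `q` are functions on `ZMod n`
where the class `0` corresponds to the subscript `n`:
`p i = z_{⟨k+i⟩}` and `q i = y_{⟨1−i⟩}` (so that `p = (z_{k+1},…,z_{n−1},0,z_1,…,z_k)`
and `q = (0,y_{n−1},y_{n−2},…,y_1)`). -/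
theorem stmt_2 (n k : ℕ) (hn : 3 ≤ n) (hk : k ≤ n - 2)
    (z y : ZMod n → ℝ) (hz0 : z 0 = 0) (hy0 : y 0 = 0)
    (hzpos : ∀ p : ZMod n, p ≠ 0 → 0 < z p)
    (hypos : ∀ p : ZMod n, p ≠ 0 → 0 < y p)
    (y' z' : ZMod n → ℝ) (hy'0 : y' 0 = 0) (hz'0 : z' 0 = 0)
    (hy' : ∀ j : ZMod n, j ≠ 0 →
      y' j = y j * (z (((k + 2 : ℕ) : ZMod n) - j) + y (j - 1)) /
        (z (((k + 1 : ℕ) : ZMod n) - j) + y j))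
    (hz' : ∀ j : ZMod n, j ≠ 0 →
      z' j = z j * (z (j + 1) + y (((k : ℕ) : ZMod n) - j)) /
        (z j + y (((k + 1 : ℕ) : ZMod n) - j)))
    (p q : ZMod n → ℝ)
    (hp : ∀ i : ZMod n, p i = z (((k : ℕ) : ZMod n) + i))
    (hq : ∀ i : ZMod n, q i = y (1 - i)) :
    ∀ i : ZMod n,
      p i * (p (i + 1) + q (i + 1)) / (p i + q i) = z' (((k : ℕ) : ZMod n) + i) ∧
      q i * (p (i + 1) + q (i + 1)) / (p i + q i) = y' (1 - i) := by
  intro i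
  refine ⟨?_, ?_⟩
  · by_cases hj : ((k : ℕ) : ZMod n) + i = 0
    · simp [hp, hq, hj, hz0, hz'0]
    · rw [hz' _ hj, hp, hp, hq, hq]
      have h0 : ((k : ℕ) : ZMod n) + (i + 1) = ((k : ℕ) : ZMod n) + i + 1 := by ring
      have h1 : (1 : ZMod n) - (i + 1) = ((k : ℕ) : ZMod n) - (((k : ℕ) : ZMod n) + i) := by
        ring
      have h2 : (1 : ZMod n) - i = (((k + 1 : ℕ)) : ZMod n) - (((k : ℕ) : ZMod n) + i) := by
        push_cast; ring
      rw [h0, h1, h2]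
  · by_cases hm : (1 : ZMod n) - i = 0
    · simp [hp, hq, hm, hy0, hy'0]
    · rw [hy' _ hm, hp, hp, hq, hq]
      have h1 : ((k : ℕ) : ZMod n) + (i + 1) = ((k + 2 : ℕ) : ZMod n) - (1 - i) := by
        push_cast; ring
      have h2 : (1 : ZMod n) - (i + 1) = (1 - i) - 1 := by ring
      have h3 : ((k : ℕ) : ZMod n) + i = ((k + 1 : ℕ) : ZMod n) - (1 - i) := by
        push_cast; ring
      rw [h1, h2, h3]
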